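/- (Superposition principle for 1 < p ≤ 2.) Let N ≥ 2 be an integer, p a real number with 1 < p ≤ 2, 0 < r₀ < R₀ ≤ ∞, and let V be a continuous function on (r₀, R₀) with V ≥ 0. Let u, v be C² functions on (r₀, R₀) such that 0 < v(r) ≤ u(r) and either u'(r) < v'(r) < 0 for all r, or u'(r) > v'(r) > 0 for all r. If u is a radial supersolution and v is a radial subsolution of −Δ_p u − V|u|^{p−2}u = 0, then u − v is a radial supersolution of the same equation, i.e. −|u'(r) − v'(r)|^{p−2}·L(u−v)(r) − V(r)·(u(r) − v(r))^{p−1} ≥ 0 for all r ∈ (r₀, R₀). -/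

import Mathlib

-- superadditivity of weighted geometric mean
lemma superadd (α : ℝ) (hα0 : 0 ≤ α) (hα1 : α ≤ 1) (x1 x2 y1 y2 : ℝ)
    (hx1 : 0 ≤ x1) (hx2 : 0 < x2) (hy1 : 0 < y1) (hy2 : 0 < y2) :
    x1 ^ α * y1 ^ (1 - α) + x2 ^ α * y2 ^ (1 - α) ≤ (x1 + x2) ^ α * (y1 + y2) ^ (1 - α) := by
  set X := x1 + x2 with hX
  set Y := y1 + y2 with hY
  have hXpos : 0 < X := by positivity
  have hYpos : 0 < Y := by positivity
  have h1 : (x1 / X) ^ α * (y1 / Y) ^ (1 - α) ≤ α * (x1 / X) + (1 - α) * (y1 / Y) :=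
    Real.geom_mean_le_arith_mean2_weighted hα0 (by linarith) (by positivity) (by positivity)
      (by ring)
  have h2 : (x2 / X) ^ α * (y2 / Y) ^ (1 - α) ≤ α * (x2 / X) + (1 - α) * (y2 / Y) :=
    Real.geom_mean_le_arith_mean2_weighted hα0 (by linarith) (by positivity) (by positivity)
      (by ring)
  have e1 : ∀ x y : ℝ, 0 ≤ x → 0 ≤ y →
      (x / X) ^ α * (y / Y) ^ (1 - α) = (x ^ α * y ^ (1 - α)) / (X ^ α * Y ^ (1 - α)) := by
    intro x y hx hy
    rw [Real.div_rpow hx hXpos.le, Real.div_rpow hy hYpos.le, div_mul_div_comm]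
  rw [e1 x1 y1 hx1 hy1.le] at h1
  rw [e1 x2 y2 hx2.le hy2.le] at h2
  have hsum : (x1 ^ α * y1 ^ (1 - α) + x2 ^ α * y2 ^ (1 - α)) / (X ^ α * Y ^ (1 - α)) ≤ 1 := by
    have := add_le_add h1 h2
    have e2 : α * (x1 / X) + (1 - α) * (y1 / Y) + (α * (x2 / X) + (1 - α) * (y2 / Y)) = 1 := by
      field_simp
      ring
    rw [e2] at this
    calc (x1 ^ α * y1 ^ (1 - α) + x2 ^ α * y2 ^ (1 - α)) / (X ^ α * Y ^ (1 - α))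
        = x1 ^ α * y1 ^ (1 - α) / (X ^ α * Y ^ (1 - α))
          + x2 ^ α * y2 ^ (1 - α) / (X ^ α * Y ^ (1 - α)) := by ring
      _ ≤ 1 := this
  have hXY : 0 < X ^ α * Y ^ (1 - α) := by positivity
  calc x1 ^ α * y1 ^ (1 - α) + x2 ^ α * y2 ^ (1 - α)
      = (x1 ^ α * y1 ^ (1 - α) + x2 ^ α * y2 ^ (1 - α)) / (X ^ α * Y ^ (1 - α))
        * (X ^ α * Y ^ (1 - α)) := by field_simp
    _ ≤ 1 * (X ^ α * Y ^ (1 - α)) := mul_le_mul_of_nonneg_right hsum hXY.le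
    _ = X ^ α * Y ^ (1 - α) := by ring

/-- The ordinary differential operator `L u (r) = (p-1) u''(r) + ((N-1)/r) u'(r)`,
so that for a radial function the p-Laplacian is `Δ_p u = |u'(r)|^{p-2} L u (r)`. -/
noncomputable def Lrad (N : ℕ) (p : ℝ) (u : ℝ → ℝ) (r : ℝ) : ℝ :=
  (p - 1) * deriv (deriv u) r + (((N : ℝ) - 1) / r) * deriv u r

/-- Superposition principle for `1 < p ≤ 2`: if `u` is a radial supersolution and `v`
a radial subsolution of `-Δ_p u - V |u|^{p-2} u = 0` on `(r₀, R₀)`, with `0 < v ≤ u`,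
`V ≥ 0`, and either `u' < v' < 0` everywhere or `u' > v' > 0` everywhere,
then `u - v` is a radial supersolution. -/
theorem superposition_p_le_two (N : ℕ) (hN : 2 ≤ N) (p : ℝ) (hp1 : 1 < p) (hp2 : p ≤ 2)
    (r₀ : ℝ) (R₀ : EReal) (hr₀ : 0 < r₀) (hR : (r₀ : EReal) < R₀)
    (V u v : ℝ → ℝ)
    (hVcont : ContinuousOn V {r : ℝ | r₀ < r ∧ (r : EReal) < R₀})
    (hV : ∀ r : ℝ, r₀ < r → (r : EReal) < R₀ → 0 ≤ V r)
    (hu : ContDiffOn ℝ 2 u {r : ℝ | r₀ < r ∧ (r : EReal) < R₀})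
    (hv : ContDiffOn ℝ 2 v {r : ℝ | r₀ < r ∧ (r : EReal) < R₀})
    (hvu : ∀ r : ℝ, r₀ < r → (r : EReal) < R₀ → 0 < v r ∧ v r ≤ u r)
    (hder : (∀ r : ℝ, r₀ < r → (r : EReal) < R₀ → deriv u r < deriv v r ∧ deriv v r < 0) ∨
            (∀ r : ℝ, r₀ < r → (r : EReal) < R₀ → deriv v r < deriv u r ∧ 0 < deriv v r))
    (hsup : ∀ r : ℝ, r₀ < r → (r : EReal) < R₀ →
      0 ≤ -(|deriv u r| ^ (p - 2) * Lrad N p u r) - V r * (|u r| ^ (p - 2) * u r))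
    (hsub : ∀ r : ℝ, r₀ < r → (r : EReal) < R₀ →
      -(|deriv v r| ^ (p - 2) * Lrad N p v r) - V r * (|v r| ^ (p - 2) * v r) ≤ 0) :
    ∀ r : ℝ, r₀ < r → (r : EReal) < R₀ →
      0 ≤ -(|deriv u r - deriv v r| ^ (p - 2) * Lrad N p (fun s => u s - v s) r)
        - V r * (u r - v r) ^ (p - 1) := by
  intro r hr1 hr2
  set S : Set ℝ := {r : ℝ | r₀ < r ∧ (r : EReal) < R₀} with hSdef
  have hS : IsOpen S := by
    have : S = Set.Ioi r₀ ∩ ((↑) : ℝ → EReal) ⁻¹' Set.Iio R₀ := by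
      ext x; exact Iff.rfl
    rw [this]
    exact isOpen_Ioi.inter (isOpen_Iio.preimage continuous_coe_real_ereal)
  have hrS : r ∈ S := ⟨hr1, hr2⟩
  have hnhds : S ∈ nhds r := hS.mem_nhds hrS
  -- differentiability facts
  have hudiff : ∀ s ∈ S, DifferentiableAt ℝ u s := fun s hs =>
    (hu.contDiffAt (hS.mem_nhds hs)).differentiableAt (by norm_num)
  have hvdiff : ∀ s ∈ S, DifferentiableAt ℝ v s := fun s hs =>
    (hv.contDiffAt (hS.mem_nhds hs)).differentiableAt (by norm_num)
  have hu' : ContDiffOn ℝ 1 (deriv u) S := hu.deriv_of_isOpen hS (by norm_num)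
  have hv' : ContDiffOn ℝ 1 (deriv v) S := hv.deriv_of_isOpen hS (by norm_num)
  have hu'diff : DifferentiableAt ℝ (deriv u) r :=
    (hu'.contDiffAt hnhds).differentiableAt (by norm_num)
  have hv'diff : DifferentiableAt ℝ (deriv v) r :=
    (hv'.contDiffAt hnhds).differentiableAt (by norm_num)
  -- first derivative of u - v
  have hd1 : ∀ s ∈ S, deriv (fun t => u t - v t) s = deriv u s - deriv v s := fun s hs =>
    deriv_sub (hudiff s hs) (hvdiff s hs)
  have hd1r : deriv (fun t => u t - v t) r = deriv u r - deriv v r := hd1 r hrS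
  -- second derivative of u - v
  have hd2 : deriv (deriv (fun t => u t - v t)) r =
      deriv (deriv u) r - deriv (deriv v) r := by
    have heq : deriv (fun t => u t - v t) =ᶠ[nhds r] fun s => deriv u s - deriv v s :=
      Filter.eventually_of_mem hnhds hd1
    rw [heq.deriv_eq]
    exact deriv_sub hu'diff hv'diff
  -- Lrad is linear
  have hLlin : Lrad N p (fun s => u s - v s) r = Lrad N p u r - Lrad N p v r := by
    simp only [Lrad, hd1r, hd2]; ring
  -- notation
  set a := deriv u r with ha
  set b := deriv v r with hb
  set A := |a| with hA
  set B := |b| with hB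
  have hkey : 0 < B ∧ B < A ∧ |a - b| = A - B := by
    rcases hder with h | h
    · obtain ⟨h1, h2⟩ := h r hr1 hr2
      refine ⟨by rw [hB, abs_of_neg h2]; linarith, ?_, ?_⟩
      · rw [hA, hB, abs_of_neg h2, abs_of_neg (by linarith : a < 0)]; linarith
      · rw [hA, hB, abs_of_neg h2, abs_of_neg (by linarith : a < 0),
          abs_of_neg (by linarith : a - b < 0)]; ring
    · obtain ⟨h1, h2⟩ := h r hr1 hr2
      refine ⟨by rw [hB, abs_of_pos h2]; linarith, ?_, ?_⟩
      · rw [hA, hB, abs_of_pos h2, abs_of_pos (by linarith : 0 < a)]; linarith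
      · rw [hA, hB, abs_of_pos h2, abs_of_pos (by linarith : 0 < a),
          abs_of_pos (by linarith : 0 < a - b)]
  obtain ⟨hBpos, hBA, habAB⟩ := hkey
  have hApos : 0 < A := lt_trans hBpos hBA
  set D := |a - b| with hD
  have hDpos : 0 < D := by rw [habAB]; linarith
  obtain ⟨hvpos, hvu'⟩ := hvu r hr1 hr2
  have hupos : 0 < u r := lt_of_lt_of_le hvpos hvu'
  have hVr : 0 ≤ V r := hV r hr1 hr2
  -- rewrite potentials: |u|^(p-2) * u = u^(p-1)
  have hpot : ∀ w : ℝ, 0 < w → |w| ^ (p - 2) * w = w ^ (p - 1) := by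
    intro w hw
    rw [abs_of_pos hw]
    nth_rewrite 2 [show w = w ^ (1 : ℝ) from (Real.rpow_one w).symm]
    rw [← Real.rpow_add hw]
    congr 1; ring
  -- supersolution bound: L1 ≤ -V u^(p-1) A^(2-p)
  have hsupr := hsup r hr1 hr2
  have hsubr := hsub r hr1 hr2
  set L1 := Lrad N p u r with hL1
  set L2 := Lrad N p v r with hL2
  have hs1 : A ^ (p - 2) * L1 ≤ -(V r * u r ^ (p - 1)) := by
    rw [hpot (u r) hupos] at hsupr; linarith
  have hs2 : -(V r * v r ^ (p - 1)) ≤ B ^ (p - 2) * L2 := by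
    rw [hpot (v r) hvpos] at hsubr; linarith
  have hcancel : ∀ w : ℝ, 0 < w → w ^ (2 - p) * w ^ (p - 2) = 1 := by
    intro w hw
    rw [← Real.rpow_add hw]
    norm_num
  have hL1' : L1 ≤ -(V r * u r ^ (p - 1)) * A ^ (2 - p) := by
    have := mul_le_mul_of_nonneg_left hs1 (Real.rpow_nonneg hApos.le (2 - p))
    calc L1 = A ^ (2 - p) * A ^ (p - 2) * L1 := by rw [hcancel A hApos]; ring
      _ ≤ A ^ (2 - p) * -(V r * u r ^ (p - 1)) := by rw [mul_assoc]; exact this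
      _ = -(V r * u r ^ (p - 1)) * A ^ (2 - p) := by ring
  have hL2' : -(V r * v r ^ (p - 1)) * B ^ (2 - p) ≤ L2 := by
    have := mul_le_mul_of_nonneg_left hs2 (Real.rpow_nonneg hBpos.le (2 - p))
    calc -(V r * v r ^ (p - 1)) * B ^ (2 - p) = B ^ (2 - p) * -(V r * v r ^ (p - 1)) := by ring
      _ ≤ B ^ (2 - p) * (B ^ (p - 2) * L2) := this
      _ = B ^ (2 - p) * B ^ (p - 2) * L2 := by ring
      _ = L2 := by rw [hcancel B hBpos]; ring
  -- geometric mean superadditivity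
  have hgm : (u r - v r) ^ (p - 1) * D ^ (2 - p) + v r ^ (p - 1) * B ^ (2 - p)
      ≤ u r ^ (p - 1) * A ^ (2 - p) := by
    have := superadd (p - 1) (by linarith) (by linarith) (u r - v r) (v r) (D) (B)
      (by linarith) hvpos hDpos hBpos
    have e1 : 1 - (p - 1) = 2 - p := by ring
    have e2 : u r - v r + v r = u r := by ring
    have e3 : D + B = A := by rw [habAB]; ring
    rw [e1, e2, e3] at this
    exact this
  -- main chain
  have hmain : V r * (u r - v r) ^ (p - 1) * D ^ (2 - p) ≤ L2 - L1 := by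
    have h1 : L2 - L1 ≥ V r * (u r ^ (p - 1) * A ^ (2 - p) - v r ^ (p - 1) * B ^ (2 - p)) := by
      nlinarith [hL1', hL2']
    have h2 : (u r - v r) ^ (p - 1) * D ^ (2 - p)
        ≤ u r ^ (p - 1) * A ^ (2 - p) - v r ^ (p - 1) * B ^ (2 - p) := by linarith
    calc V r * (u r - v r) ^ (p - 1) * D ^ (2 - p)
        = V r * ((u r - v r) ^ (p - 1) * D ^ (2 - p)) := by ring
      _ ≤ V r * (u r ^ (p - 1) * A ^ (2 - p) - v r ^ (p - 1) * B ^ (2 - p)) :=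
          mul_le_mul_of_nonneg_left h2 hVr
      _ ≤ L2 - L1 := h1
  have hfinal : V r * (u r - v r) ^ (p - 1) ≤ D ^ (p - 2) * (L2 - L1) := by
    have := mul_le_mul_of_nonneg_left hmain (Real.rpow_nonneg hDpos.le (p - 2))
    calc V r * (u r - v r) ^ (p - 1)
        = D ^ (p - 2) * D ^ (2 - p) * (V r * (u r - v r) ^ (p - 1)) := by
          rw [← Real.rpow_add hDpos]; norm_num
      _ = D ^ (p - 2) * (V r * (u r - v r) ^ (p - 1) * D ^ (2 - p)) := by ring
      _ ≤ D ^ (p - 2) * (L2 - L1) := this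
  rw [hLlin]
  have : -(D ^ (p - 2) * (L1 - L2)) = D ^ (p - 2) * (L2 - L1) := by ring
  linarith [hfinal]
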